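/- Let ν be a Krull valuation on K and w its Gauss extension to K(X). If a nonzero polynomial p(X) ∈ K[X] belongs to an ideal J of R(w), then every coefficient of p(X) belongs to J. -/

import Mathlib

/-- The content of a polynomial: the minimum of ν over its nonzero coefficients
(junk value 0 for the zero polynomial). -/
noncomputable def polyVal {K G : Type*} [Field K] [AddCommGroup G] [LinearOrder G] [IsOrderedAddMonoid G]
    (ν : K → G) (p : Polynomial K) : G :=
  if h : p.support.Nonempty then
    (p.support.image fun n => ν (p.coeff n)).min' (h.image _)
  else 0

/-- The Gauss extension of ν to the field of rational functions K(X):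
w(p/q) = w(p) - w(q). -/
noncomputable def gaussExt {K G : Type*} [Field K] [AddCommGroup G] [LinearOrder G] [IsOrderedAddMonoid G]
    (ν : K → G) (f : RatFunc K) : G :=
  polyVal ν f.num - polyVal ν f.denom

section aux
variable {K G : Type*} [Field K] [AddCommGroup G] [LinearOrder G] [IsOrderedAddMonoid G] (ν : K → G)

lemma polyVal_le_coeff (p : Polynomial K) {n : ℕ} (h : p.coeff n ≠ 0) :
    polyVal ν p ≤ ν (p.coeff n) := by
  have hn : n ∈ p.support := Polynomial.mem_support_iff.mpr h
  rw [polyVal, dif_pos ⟨n, hn⟩]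
  exact Finset.min'_le _ _ (Finset.mem_image_of_mem _ hn)

lemma polyVal_C {a : K} (ha : a ≠ 0) : polyVal ν (Polynomial.C a) = ν a := by
  have hs : (Polynomial.C a).support = {0} := Polynomial.support_C ha
  rw [polyVal, dif_pos (by rw [hs]; exact ⟨0, Finset.mem_singleton_self 0⟩)]
  simp [hs]

lemma polyVal_C_mul (hmul : ∀ a b : K, a ≠ 0 → b ≠ 0 → ν (a * b) = ν a + ν b)
    {b : K} (hb : b ≠ 0) {q : Polynomial K} (hq : q ≠ 0) :
    polyVal ν (Polynomial.C b * q) = ν b + polyVal ν q := by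
  have hsupp : (Polynomial.C b * q).support = q.support := by
    ext m
    simp [Polynomial.mem_support_iff, Polynomial.coeff_C_mul, hb]
  have hqn : q.support.Nonempty := Polynomial.nonempty_support_iff.mpr hq
  rw [polyVal, polyVal, dif_pos (by rw [hsupp]; exact hqn), dif_pos hqn]
  apply le_antisymm
  · obtain ⟨m, hm, hval⟩ := Finset.mem_image.mp
      ((q.support.image fun n => ν (q.coeff n)).min'_mem (hqn.image _))
    refine le_trans (Finset.min'_le _ (ν b + ν (q.coeff m)) ?_) (by rw [hval])
    refine Finset.mem_image.mpr ⟨m, by rwa [hsupp], ?_⟩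
    rw [Polynomial.coeff_C_mul, hmul _ _ hb (Polynomial.mem_support_iff.mp hm)]
  · apply Finset.le_min'
    intro y hy
    obtain ⟨m, hm, hval⟩ := Finset.mem_image.mp hy
    rw [hsupp] at hm
    rw [← hval, Polynomial.coeff_C_mul, hmul _ _ hb (Polynomial.mem_support_iff.mp hm)]
    exact add_le_add (le_refl _) (Finset.min'_le _ _ (Finset.mem_image_of_mem _ hm))

end aux


/-- If a nonzero polynomial p belongs to an ideal J of the valuation ring R(w) of the
Gauss extension w, then all coefficients of p belong to J. -/
theorem stmt_14 {K G : Type*} [Field K] [AddCommGroup G] [LinearOrder G] [IsOrderedAddMonoid G]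
    (ν : K → G)
    (hmul : ∀ a b : K, a ≠ 0 → b ≠ 0 → ν (a * b) = ν a + ν b)
    (hadd : ∀ a b : K, a ≠ 0 → b ≠ 0 → a + b ≠ 0 → min (ν a) (ν b) ≤ ν (a + b))
    (S : Subring (RatFunc K))
    (hS : ∀ x : RatFunc K, x ∈ S ↔ (x = 0 ∨ 0 ≤ gaussExt ν x))
    (J : Ideal S) (p : Polynomial K) (hp : p ≠ 0)
    (hpS : algebraMap (Polynomial K) (RatFunc K) p ∈ S)
    (hpJ : (⟨algebraMap (Polynomial K) (RatFunc K) p, hpS⟩ : S) ∈ J) :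
    ∀ n : ℕ, ∃ h : (RatFunc.C (p.coeff n) : RatFunc K) ∈ S,
      (⟨RatFunc.C (p.coeff n), h⟩ : S) ∈ J := by
  intro n
  by_cases hc : p.coeff n = 0
  · have h0 : (RatFunc.C (p.coeff n) : RatFunc K) ∈ S :=
      (hS _).mpr (Or.inl (by rw [hc, map_zero]))
    refine ⟨h0, ?_⟩
    have : (⟨RatFunc.C (p.coeff n), h0⟩ : S) = 0 := by ext; simp [hc]
    rw [this]; exact J.zero_mem
  -- main case
  set P : RatFunc K := algebraMap (Polynomial K) (RatFunc K) p with hPdef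
  have hPne : P ≠ 0 := by
    simpa [hPdef] using (RatFunc.algebraMap_ne_zero hp)
  set c : K := p.coeff n with hcdef
  set f : RatFunc K := RatFunc.C c / P with hfdef
  have hfP : f * P = RatFunc.C c := div_mul_cancel₀ _ hPne
  have hCc : (RatFunc.C c : RatFunc K) = algebraMap (Polynomial K) (RatFunc K) (Polynomial.C c) := by
    simp [RatFunc.algebraMap_C]
  have hCcne : (RatFunc.C c : RatFunc K) ≠ 0 := by
    rw [hCc]
    exact RatFunc.algebraMap_ne_zero (Polynomial.C_ne_zero.mpr hc)
  have hfne : f ≠ 0 := div_ne_zero hCcne hPne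
  have hnum_eq : algebraMap (Polynomial K) (RatFunc K) f.num
      = f * algebraMap (Polynomial K) (RatFunc K) f.denom :=
    (div_eq_iff (RatFunc.algebraMap_ne_zero (RatFunc.denom_ne_zero f))).mp
      (RatFunc.num_div_denom f)
  have key : f.num * p = Polynomial.C c * f.denom := by
    have h1 : algebraMap (Polynomial K) (RatFunc K) (f.num * p)
        = algebraMap (Polynomial K) (RatFunc K) (Polynomial.C c * f.denom) := by
      rw [map_mul, map_mul, hnum_eq, ← hCc, ← hPdef, mul_right_comm, hfP]
    exact RatFunc.algebraMap_injective K h1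
  have hdenom_ne : f.denom ≠ 0 := RatFunc.denom_ne_zero f
  have hnum_ne : f.num ≠ 0 := RatFunc.num_ne_zero hfne
  have hcop := RatFunc.isCoprime_num_denom f
  have hdvd : f.denom ∣ p := by
    refine (IsCoprime.dvd_of_dvd_mul_left hcop.symm) ?_
    exact ⟨Polynomial.C c, by rw [key]; ring⟩
  obtain ⟨q, hq⟩ := hdvd
  have hqne : q ≠ 0 := by rintro rfl; exact hp (by simp [hq])
  have key2 : f.num * q = Polynomial.C c := by
    apply mul_left_cancel₀ hdenom_ne
    calc f.denom * (f.num * q) = f.num * (f.denom * q) := by ring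
      _ = f.num * p := by rw [← hq]
      _ = Polynomial.C c * f.denom := key
      _ = f.denom * Polynomial.C c := by ring
  -- f.num and q are constants
  have hdeg : f.num.natDegree = 0 ∧ q.natDegree = 0 := by
    have := congrArg Polynomial.natDegree key2
    rw [Polynomial.natDegree_mul hnum_ne hqne, Polynomial.natDegree_C] at this
    omega
  obtain ⟨a, ha⟩ : ∃ a, f.num = Polynomial.C a :=
    ⟨_, Polynomial.eq_C_of_natDegree_eq_zero hdeg.1⟩
  obtain ⟨b, hbq⟩ : ∃ b, q = Polynomial.C b :=
    ⟨_, Polynomial.eq_C_of_natDegree_eq_zero hdeg.2⟩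
  have hane : a ≠ 0 := by rintro rfl; rw [map_zero] at ha; exact hnum_ne ha
  have hbne : b ≠ 0 := by rintro rfl; rw [map_zero] at hbq; exact hqne hbq
  have hab : a * b = c := by
    have := key2
    rw [ha, hbq, ← Polynomial.C_mul] at this
    exact Polynomial.C_injective this
  -- valuation computation
  have hvp : polyVal ν p = ν b + polyVal ν f.denom := by
    rw [hq, hbq, mul_comm, polyVal_C_mul ν hmul hbne hdenom_ne]
  have hle : polyVal ν p ≤ ν c := polyVal_le_coeff ν p hc
  have hca : ν c = ν a + ν b := by rw [← hab, hmul _ _ hane hbne]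
  have hfS : f ∈ S := by
    refine (hS f).mpr (Or.inr ?_)
    rw [gaussExt, ha, polyVal_C ν hane, sub_nonneg]
    have : ν b + polyVal ν f.denom ≤ ν a + ν b := by
      rw [← hvp, ← hca]; exact hle
    rw [add_comm (ν a) (ν b)] at this
    exact le_of_add_le_add_left this
  have hCS : (RatFunc.C c : RatFunc K) ∈ S := by
    rw [← hfP]; exact S.mul_mem hfS hpS
  refine ⟨hCS, ?_⟩
  have : (⟨RatFunc.C c, hCS⟩ : S) = ⟨f, hfS⟩ * ⟨P, hpS⟩ := by
    ext; simp [hfP]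
  rw [this]
  exact J.mul_mem_left _ hpJ
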